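/- Let n ≥ 2 and N ≥ 1 be integers, A = (a_{ij})_{1≤i,j≤n-1} ∈ M_{n-1}(ℂ), and x, m ∈ X(n,N). Then φ_A(x;m) = ∑_{C} [∏_{i=1}^{n-1} (−x_i)_{∑_{j=1}^{n-1} c_{ij}} · ∏_{j=1}^{n-1} (−m_j)_{∑_{i=1}^{n-1} c_{ij}}] / (−N)_{∑_{i,j} c_{ij}} · ∏_{i,j=1}^{n-1} (1−a_{ij})^{c_{ij}} / ∏_{i,j=1}^{n-1} c_{ij}!, where the sum runs over all matrices C = (c_{ij})_{1≤i,j≤n-1} with nonnegative integer entries satisfying ∑_{i,j} c_{ij} ≤ N, and (a)_k = a(a+1)⋯(a+k−1) denotes the Pochhammer symbol. -/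

import Mathlib

set_option maxHeartbeats 1000000

open Finset MvPolynomial

/-- `X(n,N)`: the set of tuples in `ℕ₀ⁿ` with coordinate sum `N`,
as a `Finset` of functions `Fin n → ℕ`. -/
def XSet (n N : ℕ) : Finset (Fin n → ℕ) :=
  (Fintype.piFinset fun _ : Fin n => Finset.range (N + 1)).filter fun x => ∑ i, x i = N

/-- The multivariate Krawtchouk polynomial `φ_A(x;m)` associated to the bordered
matrix `A₀` (whose row `0` and column `0` consist of ones): it is the coefficient of
`t^m` in the generating function `∏ᵢ (∑ⱼ (A₀)ᵢⱼ tⱼ)^{xᵢ}`, divided by the multinomial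
coefficient `binom(N, m) = (∑ mᵢ)! / ∏ mᵢ!`. -/
noncomputable def phi {n : ℕ} (A0 : Matrix (Fin n) (Fin n) ℂ) (x m : Fin n → ℕ) : ℂ :=
  MvPolynomial.coeff (Finsupp.equivFunOnFinite.symm m)
      (∏ i, (∑ j, MvPolynomial.C (A0 i j) * MvPolynomial.X j) ^ x i)
    / (Nat.multinomial Finset.univ m : ℂ)

lemma poch_eval_neg_nat (a k : ℕ) :
    (ascPochhammer ℂ k).eval (-(a:ℂ)) = (-1)^k * (a.descFactorial k : ℂ) := by
  rw [ascPochhammer_eval_neg_eq_descPochhammer, descPochhammer_eval_eq_descFactorial]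

lemma descFact_cast (a k : ℕ) (h : k ≤ a) :
    (a.descFactorial k : ℂ) = (a.factorial : ℂ) / ((a-k).factorial : ℂ) := by
  rw [eq_div_iff (by exact_mod_cast (a-k).factorial_ne_zero)]
  rw [← Nat.cast_mul, mul_comm, Nat.factorial_mul_descFactorial h]

lemma multinomial_cast {n : ℕ} (f : Fin n → ℕ) :
    (Nat.multinomial Finset.univ f : ℂ) = ((∑ i, f i).factorial : ℂ) / (∏ i, ((f i).factorial : ℂ)) := by
  rw [eq_div_iff (Finset.prod_ne_zero_iff.mpr fun i _ => Nat.cast_ne_zero.mpr (f i).factorial_ne_zero), ← Nat.cast_prod, mul_comm, ← Nat.cast_mul,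
    Nat.multinomial_spec]

lemma choose_cast (a k : ℕ) (h : k ≤ a) :
    (a.choose k : ℂ) = (a.factorial : ℂ) / ((k.factorial : ℂ) * ((a-k).factorial : ℂ)) := by
  rw [eq_div_iff (by
    exact mul_ne_zero (Nat.cast_ne_zero.mpr k.factorial_ne_zero)
      (Nat.cast_ne_zero.mpr (a-k).factorial_ne_zero))]
  push_cast [← Nat.choose_mul_factorial_mul_factorial h]
  ring

lemma sign3 (t : ℕ) (X Y Z : ℂ) :
    ((-1:ℂ)^t * X) * ((-1:ℂ)^t * Y) / ((-1:ℂ)^t * Z) = (-1:ℂ)^t * (X * Y / Z) := by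
  have h : ((-1:ℂ)^t) * ((-1:ℂ)^t) = 1 := by
    rw [← pow_add]; exact Even.neg_one_pow ⟨t, rfl⟩
  have hinv : ((-1:ℂ)^t)⁻¹ = (-1:ℂ)^t := inv_eq_of_mul_eq_one_right h
  rw [mul_mul_mul_comm, h, one_mul, mul_comm ((-1:ℂ)^t) Z, ← div_div, div_eq_mul_inv (X*Y/Z),
    hinv, mul_comm]

lemma pointwise (n N : ℕ) (A0 : Matrix (Fin n) (Fin n) ℂ) (x m : Fin n → ℕ)
    (hx : ∑ i, x i = N) (hm : ∑ j, m j = N) (c : Fin n → Fin n → ℕ) :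
    (∏ i, ((x i).choose (∑ j, c i j) : ℂ)) * (-1:ℂ)^(∑ i, ∑ j, c i j)
      * (∏ i, (Nat.multinomial Finset.univ (c i) : ℂ))
      * (∏ i, ∏ j, (1 - A0 i j)^(c i j))
      * (if ∀ j, (∑ i, c i j) ≤ m j then
          ((Nat.multinomial Finset.univ (fun j => m j - ∑ i, c i j) : ℕ) : ℂ) else 0)
    = (Nat.multinomial Finset.univ m : ℂ) *
      ((∏ i, (ascPochhammer ℂ (∑ j, c i j)).eval (-(x i : ℂ)))
        * (∏ j, (ascPochhammer ℂ (∑ i, c i j)).eval (-(m j : ℂ)))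
        / (ascPochhammer ℂ (∑ i, ∑ j, c i j)).eval (-(N : ℂ))
        * ((∏ i, ∏ j, (1 - A0 i j) ^ c i j)
            / (∏ i, ∏ j, ((c i j).factorial : ℂ)))) := by
  by_cases hc1 : ∀ i, (∑ j, c i j) ≤ x i
  swap
  · push_neg at hc1
    obtain ⟨i0, hi0⟩ := hc1
    have z1 : (∏ i, ((x i).choose (∑ j, c i j) : ℂ)) = 0 :=
      Finset.prod_eq_zero (Finset.mem_univ i0)
        (by rw [Nat.choose_eq_zero_of_lt hi0, Nat.cast_zero])
    have z2 : (∏ i, (ascPochhammer ℂ (∑ j, c i j)).eval (-(x i : ℂ))) = 0 :=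
      Finset.prod_eq_zero (Finset.mem_univ i0)
        (by rw [poch_eval_neg_nat, Nat.descFactorial_eq_zero_iff_lt.mpr hi0]; simp)
    rw [z1, z2]
    simp
  by_cases hc2 : ∀ j, (∑ i, c i j) ≤ m j
  swap
  · push_neg at hc2
    obtain ⟨j0, hj0⟩ := hc2
    have z2 : (∏ j, (ascPochhammer ℂ (∑ i, c i j)).eval (-(m j : ℂ))) = 0 :=
      Finset.prod_eq_zero (Finset.mem_univ j0)
        (by rw [poch_eval_neg_nat, Nat.descFactorial_eq_zero_iff_lt.mpr hj0]; simp)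
    rw [if_neg (by push_neg; exact ⟨j0, hj0⟩), z2]
    simp
  rw [if_pos hc2]
  have ht : (∑ i, ∑ j, c i j) ≤ N := hx ▸ Finset.sum_le_sum (fun i _ => hc1 i)
  have hts : ∑ j, (∑ i, c i j) = ∑ i, ∑ j, c i j := Finset.sum_comm
  have hsub : ∑ j, (m j - ∑ i, c i j) = N - ∑ i, ∑ j, c i j := by
    rw [Finset.sum_tsub_distrib Finset.univ (fun j _ => hc2 j), hm, hts]
  -- closed forms
  have h1 : (∏ i, ((x i).choose (∑ j, c i j) : ℂ))
      = (∏ i, ((x i).factorial : ℂ)) /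
        ((∏ i, (((∑ j, c i j)).factorial : ℂ)) * ∏ i, (((x i - ∑ j, c i j)).factorial : ℂ)) := by
    rw [← Finset.prod_mul_distrib, ← Finset.prod_div_distrib]
    exact Finset.prod_congr rfl fun i _ => choose_cast _ _ (hc1 i)
  have h2 : (∏ i, (ascPochhammer ℂ (∑ j, c i j)).eval (-(x i : ℂ)))
      = (-1:ℂ)^(∑ i, ∑ j, c i j) *
        ((∏ i, ((x i).factorial : ℂ)) / (∏ i, (((x i - ∑ j, c i j)).factorial : ℂ))) := by
    rw [← Finset.prod_pow_eq_pow_sum, ← Finset.prod_div_distrib, ← Finset.prod_mul_distrib]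
    refine Finset.prod_congr rfl fun i _ => ?_
    rw [poch_eval_neg_nat, descFact_cast _ _ (hc1 i)]
  have h3 : (∏ j, (ascPochhammer ℂ (∑ i, c i j)).eval (-(m j : ℂ)))
      = (-1:ℂ)^(∑ i, ∑ j, c i j) *
        ((∏ j, ((m j).factorial : ℂ)) / (∏ j, (((m j - ∑ i, c i j)).factorial : ℂ))) := by
    rw [← hts, ← Finset.prod_pow_eq_pow_sum, ← Finset.prod_div_distrib, ← Finset.prod_mul_distrib]
    refine Finset.prod_congr rfl fun j _ => ?_
    rw [poch_eval_neg_nat, descFact_cast _ _ (hc2 j)]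
  have h4 : (ascPochhammer ℂ (∑ i, ∑ j, c i j)).eval (-(N : ℂ))
      = (-1:ℂ)^(∑ i, ∑ j, c i j) * ((N.factorial : ℂ) / ((N - ∑ i, ∑ j, c i j).factorial : ℂ)) := by
    rw [poch_eval_neg_nat, descFact_cast _ _ ht]
  have h5 : (∏ i, (Nat.multinomial Finset.univ (c i) : ℂ))
      = (∏ i, (((∑ j, c i j)).factorial : ℂ)) / (∏ i, ∏ j, ((c i j).factorial : ℂ)) := by
    rw [← Finset.prod_div_distrib]
    exact Finset.prod_congr rfl fun i _ => multinomial_cast (c i)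
  have h6 : ((Nat.multinomial Finset.univ (fun j => m j - ∑ i, c i j) : ℕ) : ℂ)
      = (((N - ∑ i, ∑ j, c i j).factorial : ℂ)) / (∏ j, (((m j - ∑ i, c i j)).factorial : ℂ)) := by
    rw [multinomial_cast, hsub]
  have h7 : (Nat.multinomial Finset.univ m : ℂ)
      = ((N.factorial : ℂ)) / (∏ j, ((m j).factorial : ℂ)) := by
    rw [multinomial_cast, hm]
  rw [h1, h2, h3, h4, h5, h6, h7, sign3]
  have e1 : (∏ i, (((∑ j, c i j)).factorial : ℂ)) ≠ 0 :=
    Finset.prod_ne_zero_iff.mpr fun i _ => Nat.cast_ne_zero.mpr (Nat.factorial_ne_zero _)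
  have e2 : (∏ i, (((x i - ∑ j, c i j)).factorial : ℂ)) ≠ 0 :=
    Finset.prod_ne_zero_iff.mpr fun i _ => Nat.cast_ne_zero.mpr (Nat.factorial_ne_zero _)
  have e3 : (∏ i, ∏ j, ((c i j).factorial : ℂ)) ≠ 0 :=
    Finset.prod_ne_zero_iff.mpr fun i _ =>
      Finset.prod_ne_zero_iff.mpr fun j _ => Nat.cast_ne_zero.mpr (Nat.factorial_ne_zero _)
  have e4 : (∏ j, (((m j - ∑ i, c i j)).factorial : ℂ)) ≠ 0 :=
    Finset.prod_ne_zero_iff.mpr fun j _ => Nat.cast_ne_zero.mpr (Nat.factorial_ne_zero _)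
  have e5 : (∏ j, ((m j).factorial : ℂ)) ≠ 0 :=
    Finset.prod_ne_zero_iff.mpr fun j _ => Nat.cast_ne_zero.mpr (Nat.factorial_ne_zero _)
  have e6 : ((N.factorial : ℂ)) ≠ 0 := Nat.cast_ne_zero.mpr (Nat.factorial_ne_zero _)
  have e7 : (((N - ∑ i, ∑ j, c i j).factorial : ℂ)) ≠ 0 :=
    Nat.cast_ne_zero.mpr (Nat.factorial_ne_zero _)
  have e8 : ((-1 : ℂ)^(∑ i, ∑ j, c i j)) ≠ 0 := pow_ne_zero _ (by norm_num)
  set a1 := (∏ i, ((x i).factorial : ℂ)) with ha1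
  set a2 := (∏ i, (((∑ j, c i j)).factorial : ℂ)) with ha2
  set a3 := (∏ i, (((x i - ∑ j, c i j)).factorial : ℂ)) with ha3
  set a4 := (∏ i, ∏ j, ((c i j).factorial : ℂ)) with ha4
  set a5 := (∏ j, ((m j).factorial : ℂ)) with ha5
  set a6 := (∏ j, (((m j - ∑ i, c i j)).factorial : ℂ)) with ha6
  set a7 := ((N.factorial : ℂ)) with ha7
  set a8 := (((N - ∑ i, ∑ j, c i j).factorial : ℂ)) with ha8
  set a9 := ((-1 : ℂ)^(∑ i, ∑ j, c i j)) with ha9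
  set pb := (∏ i, ∏ j, (1 - A0 i j)^(c i j)) with hpb
  field_simp

lemma prod_X_pow {n : ℕ} (c : Fin n → ℕ) :
    (∏ j, (MvPolynomial.X j : MvPolynomial (Fin n) ℂ) ^ (c j))
      = monomial (Finsupp.equivFunOnFinite.symm c) 1 := by
  rw [← prod_X_pow_eq_monomial]
  exact (Finset.prod_subset (Finset.subset_univ _) (fun j _ hj => by
    have : c j = 0 := by
      have := Finsupp.notMem_support_iff.mp hj
      simpa using this
    simp [this])).symm

lemma coeff_sum_X_pow {n : ℕ} (M : ℕ) (d : Fin n →₀ ℕ) :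
    MvPolynomial.coeff d ((∑ j, (MvPolynomial.X j : MvPolynomial (Fin n) ℂ))^M)
      = if (∑ j, d j) = M then ((Nat.multinomial Finset.univ (⇑d) : ℕ) : ℂ) else 0 := by
  classical
  rw [Finset.sum_pow_eq_sum_piAntidiag, MvPolynomial.coeff_sum]
  have key : ∀ k ∈ Finset.piAntidiag Finset.univ M,
      MvPolynomial.coeff d
        ((Nat.multinomial Finset.univ k : MvPolynomial (Fin n) ℂ) * ∏ j, MvPolynomial.X j ^ k j)
        = if k = ⇑d then ((Nat.multinomial Finset.univ k : ℕ):ℂ) else 0 := by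
    intro k _
    rw [prod_X_pow, ← MvPolynomial.C_eq_coe_nat, coeff_C_mul, coeff_monomial]
    have hcond : (Finsupp.equivFunOnFinite.symm k = d) ↔ (k = ⇑d) := by
      constructor
      · intro h; rw [← h]; rfl
      · intro h; rw [h]; exact Finsupp.equivFunOnFinite.symm_apply_apply d
    by_cases h : k = ⇑d
    · rw [if_pos (hcond.mpr h), if_pos h, mul_one]
    · rw [if_neg (fun hh => h (hcond.mp hh)), if_neg h, mul_zero]
  rw [Finset.sum_congr rfl key, Finset.sum_ite_eq' (Finset.piAntidiag Finset.univ M) (⇑d)]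
  simp [Finset.mem_piAntidiag]

lemma coeff_expansion (n N : ℕ) (A0 : Matrix (Fin n) (Fin n) ℂ) (x m : Fin n → ℕ)
    (hx : ∑ i, x i = N) (hm : ∑ j, m j = N) :
    MvPolynomial.coeff (Finsupp.equivFunOnFinite.symm m)
        (∏ i, (∑ j, MvPolynomial.C (A0 i j) * MvPolynomial.X j) ^ x i)
      = ∑ c ∈ Fintype.piFinset (fun _ : Fin n => Fintype.piFinset fun _ : Fin n =>
            Finset.range (N + 1)),
          (∏ i, ((x i).choose (∑ j, c i j) : ℂ)) * (-1:ℂ)^(∑ i, ∑ j, c i j)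
            * (∏ i, (Nat.multinomial Finset.univ (c i) : ℂ))
            * (∏ i, ∏ j, (1 - A0 i j)^(c i j))
            * (if ∀ j, (∑ i, c i j) ≤ m j then
                ((Nat.multinomial Finset.univ (fun j => m j - ∑ i, c i j) : ℕ) : ℂ) else 0) := by
  classical
  set S : MvPolynomial (Fin n) ℂ := ∑ j, MvPolynomial.X j with hS
  set u : Fin n → MvPolynomial (Fin n) ℂ :=
    fun i => ∑ j, MvPolynomial.C (1 - A0 i j) * MvPolynomial.X j with hu
  set K := Fintype.piFinset (fun i : Fin n => Finset.range (x i + 1)) with hK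
  set L : (Fin n → ℕ) → Finset (Fin n → Fin n → ℕ) :=
    fun k => Fintype.piFinset (fun i => Finset.piAntidiag Finset.univ (k i)) with hL
  set FULL := Fintype.piFinset (fun _ : Fin n => Fintype.piFinset fun _ : Fin n =>
      Finset.range (N + 1)) with hFULL
  set F : (Fin n → Fin n → ℕ) → ℂ := fun c =>
    (∏ i, ((x i).choose (∑ j, c i j) : ℂ)) * (-1:ℂ)^(∑ i, ∑ j, c i j)
      * (∏ i, (Nat.multinomial Finset.univ (c i) : ℂ))
      * (∏ i, ∏ j, (1 - A0 i j)^(c i j))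
      * (if ∀ j, (∑ i, c i j) ≤ m j then
          ((Nat.multinomial Finset.univ (fun j => m j - ∑ i, c i j) : ℕ) : ℂ) else 0) with hF
  have hxiN : ∀ i, x i ≤ N := fun i =>
    hx ▸ Finset.single_le_sum (fun _ _ => Nat.zero_le _) (Finset.mem_univ i)
  -- step 1: rewrite each factor
  have hfac : ∀ i, (∑ j, MvPolynomial.C (A0 i j) * MvPolynomial.X j) = S - u i := by
    intro i
    rw [hS, hu, ← Finset.sum_sub_distrib]
    exact Finset.sum_congr rfl fun j _ => by rw [map_sub, MvPolynomial.C_1]; ring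
  -- step 2: full polynomial expansion
  have hP : (∏ i, (∑ j, MvPolynomial.C (A0 i j) * MvPolynomial.X j) ^ x i)
      = ∑ k ∈ K, ∑ c ∈ L k,
          MvPolynomial.C ((∏ i, ((x i).choose (k i) : ℂ)) * (-1:ℂ)^(∑ i, k i)
            * (∏ i, (Nat.multinomial Finset.univ (c i) : ℂ))
            * (∏ i, ∏ j, (1 - A0 i j)^(c i j)))
          * (S ^ (N - ∑ i, k i)
            * monomial (Finsupp.equivFunOnFinite.symm (fun j => ∑ i, c i j)) 1) := by
    calc ∏ i, (∑ j, MvPolynomial.C (A0 i j) * MvPolynomial.X j) ^ x i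
        = ∏ i, ∑ k ∈ Finset.range (x i + 1),
            (-u i)^k * S^(x i - k) * ((x i).choose k : MvPolynomial (Fin n) ℂ) := by
          refine Finset.prod_congr rfl fun i _ => ?_
          rw [hfac i, sub_eq_neg_add, add_pow]
      _ = ∑ k ∈ K, ∏ i,
            ((-u i)^(k i) * S^(x i - k i) * ((x i).choose (k i) : MvPolynomial (Fin n) ℂ)) :=
          Finset.prod_univ_sum _ _
      _ = ∑ k ∈ K, ∑ c ∈ L k, _ := Finset.sum_congr rfl ?_
    intro k hk
    have hkx : ∀ i, k i ≤ x i := by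
      intro i
      have := (Fintype.mem_piFinset.mp hk) i
      simpa [Nat.lt_succ_iff] using this
    have hper : ∀ i, (-u i)^(k i) * S^(x i - k i) * ((x i).choose (k i) : MvPolynomial (Fin n) ℂ)
        = ∑ ci ∈ Finset.piAntidiag Finset.univ (k i),
            (((x i).choose (k i) : MvPolynomial (Fin n) ℂ)
              * (-1 : MvPolynomial (Fin n) ℂ)^(k i)
              * (Nat.multinomial Finset.univ ci : MvPolynomial (Fin n) ℂ)
              * (∏ j, (MvPolynomial.C (1 - A0 i j))^(ci j))
              * (S^(x i - k i) * ∏ j, (MvPolynomial.X j)^(ci j))) := by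
      intro i
      rw [hu, neg_pow, Finset.sum_pow_eq_sum_piAntidiag, Finset.mul_sum, Finset.sum_mul,
        Finset.sum_mul]
      refine Finset.sum_congr rfl fun ci _ => ?_
      rw [show (∏ j, (MvPolynomial.C (1 - A0 i j) * MvPolynomial.X j)^(ci j))
          = (∏ j, (MvPolynomial.C (1 - A0 i j))^(ci j)) * ∏ j, (MvPolynomial.X j)^(ci j) by
        rw [← Finset.prod_mul_distrib]; exact Finset.prod_congr rfl fun j _ => mul_pow _ _ _]
      ring
    rw [Finset.prod_congr rfl fun i _ => hper i, Finset.prod_univ_sum]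
    refine Finset.sum_congr rfl fun c hc => ?_
    have hrow : ∀ i, ∑ j, c i j = k i := by
      intro i
      have := (Fintype.mem_piFinset.mp hc) i
      exact (Finset.mem_piAntidiag.mp this).1
    have e1 : (∏ i, ((x i).choose (k i) : MvPolynomial (Fin n) ℂ))
        = MvPolynomial.C (∏ i, ((x i).choose (k i) : ℂ)) := by
      rw [map_prod]
      refine Finset.prod_congr rfl fun i _ => ?_
      rw [← MvPolynomial.C_eq_coe_nat]
    have e2 : (∏ i, (-1 : MvPolynomial (Fin n) ℂ)^(k i))
        = MvPolynomial.C ((-1:ℂ)^(∑ i, k i)) := by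
      rw [Finset.prod_pow_eq_pow_sum, map_pow, map_neg, MvPolynomial.C_1]
    have e3 : (∏ i, (Nat.multinomial Finset.univ (c i) : MvPolynomial (Fin n) ℂ))
        = MvPolynomial.C (∏ i, (Nat.multinomial Finset.univ (c i) : ℂ)) := by
      rw [map_prod]
      refine Finset.prod_congr rfl fun i _ => ?_
      rw [← MvPolynomial.C_eq_coe_nat]
    have e4 : (∏ i, ∏ j, (MvPolynomial.C (1 - A0 i j) : MvPolynomial (Fin n) ℂ)^(c i j))
        = MvPolynomial.C (∏ i, ∏ j, (1 - A0 i j)^(c i j)) := by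
      rw [map_prod]
      refine Finset.prod_congr rfl fun i _ => ?_
      rw [map_prod]
      refine Finset.prod_congr rfl fun j _ => ?_
      rw [map_pow]
    have e5a : (∏ i, S^(x i - k i)) = S ^ (N - ∑ i, k i) := by
      rw [Finset.prod_pow_eq_pow_sum, Finset.sum_tsub_distrib Finset.univ (fun i _ => hkx i), hx]
    have e5b : (∏ i, ∏ j, (MvPolynomial.X j : MvPolynomial (Fin n) ℂ)^(c i j))
        = monomial (Finsupp.equivFunOnFinite.symm (fun j => ∑ i, c i j)) 1 := by
      rw [Finset.prod_comm, ← prod_X_pow]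
      exact Finset.prod_congr rfl fun j _ => (Finset.prod_pow_eq_pow_sum _ _ _)
    simp only [Finset.prod_mul_distrib]
    rw [e1, e2, e3, e4, e5a, e5b, ← map_mul, ← map_mul, ← map_mul]
  -- step 3: take coefficients
  have hterm : ∀ k ∈ K, ∀ c ∈ L k,
      MvPolynomial.coeff (Finsupp.equivFunOnFinite.symm m)
        (MvPolynomial.C ((∏ i, ((x i).choose (k i) : ℂ)) * (-1:ℂ)^(∑ i, k i)
            * (∏ i, (Nat.multinomial Finset.univ (c i) : ℂ))
            * (∏ i, ∏ j, (1 - A0 i j)^(c i j)))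
          * (S ^ (N - ∑ i, k i)
            * monomial (Finsupp.equivFunOnFinite.symm (fun j => ∑ i, c i j)) 1)) = F c := by
    intro k hk c hc
    have hrow : ∀ i, ∑ j, c i j = k i := by
      intro i
      have := (Fintype.mem_piFinset.mp hc) i
      exact (Finset.mem_piAntidiag.mp this).1
    have hrowsum : ∑ i, ∑ j, c i j = ∑ i, k i := Finset.sum_congr rfl fun i _ => hrow i
    rw [← mul_assoc, MvPolynomial.coeff_mul_monomial', MvPolynomial.coeff_C_mul, hS,
      coeff_sum_X_pow]
    by_cases hle : ∀ j, (∑ i, c i j) ≤ m j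
    · have hcond1 : (Finsupp.equivFunOnFinite.symm (fun j => ∑ i, c i j))
          ≤ Finsupp.equivFunOnFinite.symm m := by
        rw [Finsupp.le_def]
        intro j
        simpa using hle j
      have happ : ∀ j, (Finsupp.equivFunOnFinite.symm m
          - Finsupp.equivFunOnFinite.symm (fun j => ∑ i, c i j)) j = m j - ∑ i, c i j := by
        intro j
        rw [Finsupp.tsub_apply]
        simp
      have hcond2 : (∑ j, (Finsupp.equivFunOnFinite.symm m
          - Finsupp.equivFunOnFinite.symm (fun j => ∑ i, c i j)) j) = N - ∑ i, k i := by
        rw [Finset.sum_congr rfl fun j _ => happ j,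
          Finset.sum_tsub_distrib Finset.univ (fun j _ => hle j), hm, Finset.sum_comm, hrowsum]
      have hmult : Nat.multinomial Finset.univ
            (⇑(Finsupp.equivFunOnFinite.symm m
              - Finsupp.equivFunOnFinite.symm (fun j => ∑ i, c i j)))
          = Nat.multinomial Finset.univ (fun j => m j - ∑ i, c i j) :=
        congrArg _ (funext fun j => happ j)
      rw [if_pos hcond1, if_pos hcond2, hmult, hF]
      simp only [hrow, hrowsum]
      rw [if_pos hle]
      ring
    · rw [if_neg (by
        rw [Finsupp.le_def]
        push_neg
        push_neg at hle
        obtain ⟨j, hj⟩ := hle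
        exact ⟨j, by simpa using hj⟩), hF]
      simp only
      rw [if_neg hle]
      ring
  have hco : ∀ k ∈ K, MvPolynomial.coeff (Finsupp.equivFunOnFinite.symm m)
      (∑ c ∈ L k,
          MvPolynomial.C ((∏ i, ((x i).choose (k i) : ℂ)) * (-1:ℂ)^(∑ i, k i)
            * (∏ i, (Nat.multinomial Finset.univ (c i) : ℂ))
            * (∏ i, ∏ j, (1 - A0 i j)^(c i j)))
          * (S ^ (N - ∑ i, k i)
            * monomial (Finsupp.equivFunOnFinite.symm (fun j => ∑ i, c i j)) 1))
      = ∑ c ∈ L k, F c := by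
    intro k hk
    rw [MvPolynomial.coeff_sum]
    exact Finset.sum_congr rfl fun c hc => hterm k hk c hc
  rw [hP, MvPolynomial.coeff_sum, Finset.sum_congr rfl hco]
  -- step 4: collapse the double sum
  have hdisj : (K : Set (Fin n → ℕ)).PairwiseDisjoint L := by
    intro k1 h1 k2 h2 hne
    simp only [Function.onFun]
    rw [Finset.disjoint_left]
    intro c hc1 hc2
    refine hne (funext fun i => ?_)
    have e1 := (Finset.mem_piAntidiag.mp ((Fintype.mem_piFinset.mp hc1) i)).1
    have e2 := (Finset.mem_piAntidiag.mp ((Fintype.mem_piFinset.mp hc2) i)).1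
    rw [← e1, ← e2]
  rw [← Finset.sum_biUnion hdisj]
  refine Finset.sum_subset ?_ ?_
  · intro c hc
    rw [Finset.mem_biUnion] at hc
    obtain ⟨k, hk, hck⟩ := hc
    rw [hFULL, Fintype.mem_piFinset]
    intro i
    rw [Fintype.mem_piFinset]
    intro j
    rw [Finset.mem_range, Nat.lt_succ_iff]
    have h1 : c i j ≤ ∑ j', c i j' :=
      Finset.single_le_sum (fun _ _ => Nat.zero_le _) (Finset.mem_univ j)
    have h2 : ∑ j', c i j' = k i :=
      (Finset.mem_piAntidiag.mp ((Fintype.mem_piFinset.mp hck) i)).1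
    have h3 : k i ≤ x i := by
      have := (Fintype.mem_piFinset.mp hk) i
      simpa [Nat.lt_succ_iff] using this
    have h4 := hxiN i
    omega
  · intro c _ hcnot
    by_cases hall : ∀ i, (∑ j, c i j) ≤ x i
    · exfalso
      refine hcnot (Finset.mem_biUnion.mpr ⟨fun i => ∑ j, c i j, ?_, ?_⟩)
      · rw [hK, Fintype.mem_piFinset]
        intro i
        rw [Finset.mem_range, Nat.lt_succ_iff]
        exact hall i
      · rw [hL]
        rw [Fintype.mem_piFinset]
        intro i
        exact Finset.mem_piAntidiag.mpr ⟨rfl, fun _ _ => Finset.mem_univ _⟩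
    · push_neg at hall
      obtain ⟨i0, hi0⟩ := hall
      have hz : (∏ i, ((x i).choose (∑ j, c i j) : ℂ)) = 0 :=
        Finset.prod_eq_zero (Finset.mem_univ i0)
          (by rw [Nat.choose_eq_zero_of_lt hi0, Nat.cast_zero])
      rw [hF]
      simp only
      rw [hz, zero_mul, zero_mul, zero_mul, zero_mul]

/-- The hypergeometric expression (formula (1.2) of Mizukawa) for the multivariate
Krawtchouk polynomial `φ_A(x;m)`: the sum ranges over all matrices `C = (cᵢⱼ)` of
nonnegative integers, indexed by `1 ≤ i,j ≤ n-1` (encoded here as `n × n` matrices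
vanishing on row `0` and column `0`), with total entry sum at most `N`. -/
theorem phi_hypergeometric
    (n N : ℕ) (hn : 2 ≤ n) (hN : 1 ≤ N)
    (A0 : Matrix (Fin n) (Fin n) ℂ)
    (hrow : ∀ j, A0 ⟨0, by omega⟩ j = 1) (hcol : ∀ i, A0 i ⟨0, by omega⟩ = 1)
    (x m : Fin n → ℕ) (hx : x ∈ XSet n N) (hm : m ∈ XSet n N) :
    phi A0 x m =
      ∑ c ∈ (Fintype.piFinset fun _ : Fin n =>
              Fintype.piFinset fun _ : Fin n => Finset.range (N + 1)).filter
            (fun c : Fin n → Fin n → ℕ =>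
              (∑ i, ∑ j, c i j) ≤ N ∧ (∀ j, c ⟨0, by omega⟩ j = 0)
                ∧ (∀ i, c i ⟨0, by omega⟩ = 0)),
        (∏ i, (ascPochhammer ℂ (∑ j, c i j)).eval (-(x i : ℂ)))
          * (∏ j, (ascPochhammer ℂ (∑ i, c i j)).eval (-(m j : ℂ)))
          / (ascPochhammer ℂ (∑ i, ∑ j, c i j)).eval (-(N : ℂ))
          * ((∏ i, ∏ j, (1 - A0 i j) ^ c i j)
              / (∏ i, ∏ j, ((c i j).factorial : ℂ))) := by
  classical
  have hx' : ∑ i, x i = N := by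
    have := hx
    simp only [XSet, Finset.mem_filter] at this
    exact this.2
  have hm' : ∑ j, m j = N := by
    have := hm
    simp only [XSet, Finset.mem_filter] at this
    exact this.2
  have hmne : (Nat.multinomial Finset.univ m : ℂ) ≠ 0 :=
    Nat.cast_ne_zero.mpr (Nat.multinomial_pos _ _).ne'
  unfold phi
  rw [coeff_expansion n N A0 x m hx' hm',
    Finset.sum_congr rfl fun c _ => pointwise n N A0 x m hx' hm' c,
    ← Finset.mul_sum, mul_div_cancel_left₀ _ hmne]
  refine (Finset.sum_subset (Finset.filter_subset _ _) ?_).symm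
  have hz0 : (0:ℕ) < n := by omega
  intro c hcF hcnot
  rw [Finset.mem_filter] at hcnot
  push_neg at hcnot
  have h3 := hcnot hcF
  by_cases hT : (∑ i, ∑ j, c i j) ≤ N
  · by_cases hr0 : ∀ j, c (⟨0, hz0⟩ : Fin n) j = (0:ℕ)
    · obtain ⟨i1, hi1⟩ := h3 hT hr0
      have hz : (∏ i, ∏ j, (1 - A0 i j) ^ c i j) = 0 :=
        Finset.prod_eq_zero (Finset.mem_univ i1)
          (Finset.prod_eq_zero (Finset.mem_univ (⟨0, hz0⟩ : Fin n))
            (by rw [hcol i1, sub_self]; exact zero_pow hi1))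
      rw [hz, zero_div, mul_zero]
    · push_neg at hr0
      obtain ⟨j1, hj1⟩ := hr0
      have hz : (∏ i, ∏ j, (1 - A0 i j) ^ c i j) = 0 :=
        Finset.prod_eq_zero (Finset.mem_univ (⟨0, hz0⟩ : Fin n))
          (Finset.prod_eq_zero (Finset.mem_univ j1)
            (by rw [hrow j1, sub_self]; exact zero_pow hj1))
      rw [hz, zero_div, mul_zero]
  · have hz : (ascPochhammer ℂ (∑ i, ∑ j, c i j)).eval (-(N : ℂ)) = 0 :=
      ascPochhammer_eval_neg_coe_nat_of_lt (lt_of_not_ge hT)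
    rw [hz, div_zero, zero_mul]
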